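/- Let E be a finite-dimensional Euclidean space and V, W ⊆ E be subspaces. Then the angle between the orthogonal complements equals the angle between the subspaces: σ(V^⊥, W^⊥) = σ(V, W). -/

import Mathlib

open scoped InnerProductSpace

/-- The volume of a tuple of vectors: the square root of the determinant of
its Gram matrix. -/
noncomputable def tupleVol {E : Type*} [NormedAddCommGroup E] [InnerProductSpace ℝ E]
    {k : ℕ} (f : Fin k → E) : ℝ :=
  Real.sqrt (Matrix.det (Matrix.of fun i j => (inner ℝ (f i) (f j) : ℝ)))

/-- The angle `σ(V,W)` between two subspaces of a Euclidean space:
`vol(v w)/(vol(v)·vol(w))` for bases `v` of `V ⊓ (V ⊓ W)ᗮ` and `w` of `W ⊓ (V ⊓ W)ᗮ`,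
and `1` if `V ≤ W` or `W ≤ V`. -/
noncomputable def subAngle {E : Type*} [NormedAddCommGroup E] [InnerProductSpace ℝ E]
    [FiniteDimensional ℝ E] (V W : Submodule ℝ E) : ℝ :=
  letI := Classical.propDecidable (V ≤ W ∨ W ≤ V)
  if V ≤ W ∨ W ≤ V then 1
  else
    let v : Fin (Module.finrank ℝ ↥(V ⊓ (V ⊓ W)ᗮ)) → E :=
      fun i => ((Module.finBasis ℝ ↥(V ⊓ (V ⊓ W)ᗮ)) i : E)
    let w : Fin (Module.finrank ℝ ↥(W ⊓ (V ⊓ W)ᗮ)) → E :=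
      fun j => ((Module.finBasis ℝ ↥(W ⊓ (V ⊓ W)ᗮ)) j : E)
    tupleVol (Fin.append v w) / (tupleVol v * tupleVol w)

open Module Matrix

section Auxiliary

set_option linter.unusedSectionVars false

variable {E : Type*} [NormedAddCommGroup E] [InnerProductSpace ℝ E]


noncomputable def gram {ι : Type*} [Fintype ι] (f : ι → E) : Matrix ι ι ℝ :=
  Matrix.of fun i j => ⟪f i, f j⟫_ℝ

lemma gram_transform {ι κ : Type*} [Fintype ι] [Fintype κ] (t : ι → E) (u : κ → E)
    (A : Matrix ι κ ℝ) (h : ∀ i, t i = ∑ j, A i j • u j) :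
    gram t = A * gram u * Aᵀ := by
  ext i j
  show ⟪t i, t j⟫_ℝ = (A * gram u * Aᵀ) i j
  rw [Matrix.mul_apply]
  calc ⟪t i, t j⟫_ℝ = ∑ b, ⟪t i, u b⟫_ℝ * A j b := by
        rw [h j, inner_sum]
        exact Finset.sum_congr rfl fun b _ => by rw [real_inner_smul_right]; ring
    _ = ∑ b, (A * gram u) i b * Aᵀ b j := by
        refine Finset.sum_congr rfl fun b _ => ?_
        rw [Matrix.transpose_apply, Matrix.mul_apply]
        congr 1
        rw [h i, sum_inner]
        exact Finset.sum_congr rfl fun a _ => by rw [real_inner_smul_left]; rfl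

lemma gram_orthonormal {ι : Type*} [Fintype ι] [DecidableEq ι] {f : ι → E}
    (hf : Orthonormal ℝ f) : gram f = 1 := by
  ext i j
  rw [orthonormal_iff_ite] at hf
  simp [_root_.gram, hf i j, Matrix.one_apply]

lemma det_gram_append {k m : ℕ} (v : Fin k → E) (w : Fin m → E) :
    (gram (Fin.append v w)).det = (gram (Sum.elim v w)).det := by
  have h : Fin.append v w = Sum.elim v w ∘ finSumFinEquiv.symm := by
    funext i
    obtain ⟨j, rfl⟩ := finSumFinEquiv.surjective i
    rcases j with j | j <;> simp
  rw [h]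
  have h2 : gram (Sum.elim v w ∘ ⇑finSumFinEquiv.symm)
      = (gram (Sum.elim v w)).submatrix finSumFinEquiv.symm finSumFinEquiv.symm := rfl
  rw [h2, Matrix.det_submatrix_equiv_self]

lemma gram_eq_repr_mul {ι κ : Type*} [Fintype ι] [Fintype κ] [DecidableEq κ]
    (u : κ → E) (hu : Orthonormal ℝ u) (t : ι → E)
    (ht : ∀ i, t i ∈ Submodule.span ℝ (Set.range u)) :
    gram t = (Matrix.of fun i a => ⟪t i, u a⟫_ℝ) * (Matrix.of fun i a => ⟪t i, u a⟫_ℝ)ᵀ := by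
  ext i j
  obtain ⟨c, hc⟩ := Submodule.mem_span_range_iff_exists_fun ℝ |>.mp (ht j)
  have hcoef : ∀ a, c a = ⟪u a, t j⟫_ℝ := by
    intro a; rw [← hc]; exact (hu.inner_right_fintype c a).symm
  have : ⟪t i, t j⟫_ℝ = ∑ a, ⟪t j, u a⟫_ℝ * ⟪t i, u a⟫_ℝ := by
    conv_lhs => rw [← hc]
    rw [inner_sum]
    refine Finset.sum_congr rfl fun a _ => ?_
    rw [real_inner_smul_right, hcoef a, real_inner_comm (u a) (t j)]
  simpa [_root_.gram, Matrix.mul_apply, mul_comm] using this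

lemma orthonormal_sum_elim {ι κ : Type*} {a : ι → E} {b : κ → E}
    (ha : Orthonormal ℝ a) (hb : Orthonormal ℝ b)
    (hab : ∀ i j, ⟪a i, b j⟫_ℝ = 0) : Orthonormal ℝ (Sum.elim a b) := by
  classical
  rw [orthonormal_iff_ite] at ha hb ⊢
  rintro (i | i) (j | j)
  · simpa using ha i j
  · simpa using hab i j
  · simpa [real_inner_comm] using hab j i
  · simpa using hb i j

/-- The core determinant computation. -/
lemma det_gram_elim {p q : ℕ} (a : Fin p → E) (a' : Fin q → E) (b : Fin q → E)
    (hu : Orthonormal ℝ (Sum.elim a a'))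
    (hb : ∀ j, b j ∈ Submodule.span ℝ (Set.range (Sum.elim a a'))) :
    (gram (Sum.elim a b)).det = ((Matrix.of fun i j => ⟪b i, a' j⟫_ℝ).det) ^ 2 := by
  have ht : ∀ i, Sum.elim a b i ∈ Submodule.span ℝ (Set.range (Sum.elim a a')) := by
    rintro (i | j)
    · exact Submodule.subset_span ⟨Sum.inl i, rfl⟩
    · exact hb j
  rw [gram_eq_repr_mul _ hu _ ht, Matrix.det_mul, Matrix.det_transpose, ← sq]
  congr 1
  have hM : (Matrix.of fun i c => ⟪Sum.elim a b i, Sum.elim a a' c⟫_ℝ)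
      = Matrix.fromBlocks 1 0 (Matrix.of fun i j => ⟪b i, a j⟫_ℝ)
          (Matrix.of fun i j => ⟪b i, a' j⟫_ℝ) := by
    rw [orthonormal_iff_ite] at hu
    ext i c
    rcases i with i | i <;> rcases c with c | c
    · simpa [Matrix.one_apply] using hu (Sum.inl i) (Sum.inl c)
    · simpa using hu (Sum.inl i) (Sum.inr c)
    · rfl
    · rfl
  rw [hM, Matrix.det_fromBlocks_zero₁₂, Matrix.det_one, one_mul]


lemma orthonormal_coe {S : Submodule ℝ E} {ι : Type*} [Fintype ι] (b : OrthonormalBasis ι ℝ S) :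
    Orthonormal ℝ (fun i => (b i : E)) := by
  classical
  rw [orthonormal_iff_ite]
  intro i j
  have h := (orthonormal_iff_ite.mp b.orthonormal) i j
  rwa [Submodule.coe_inner] at h

lemma span_coe_basis {S : Submodule ℝ E} {ι : Type*} [Fintype ι] (b : OrthonormalBasis ι ℝ S) :
    Submodule.span ℝ (Set.range (fun i => (b i : E))) = S := by
  have h : Set.range (fun i => (b i : E)) = S.subtype '' (Set.range b) := by
    rw [← Set.range_comp]; rfl
  rw [h, Submodule.span_image]
  have h2 : Submodule.span ℝ (Set.range ⇑b) = ⊤ := by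
    have := b.toBasis.span_eq
    rwa [b.coe_toBasis] at this
  rw [h2, Submodule.map_top, Submodule.range_subtype]

lemma tupleVol_eq_sqrt {k : ℕ} (f : Fin k → E) : tupleVol f = Real.sqrt (gram f).det := rfl

section
variable [FiniteDimensional ℝ E]

/-- tupleVol of coerced arbitrary basis in terms of orthonormal basis. -/
lemma coe_basis_repr {S : Submodule ℝ E} {p : ℕ} (b : Basis (Fin p) ℝ S)
    (o : OrthonormalBasis (Fin p) ℝ S) (i : Fin p) :
    ((b i : E)) = ∑ j, o.repr (b i) j • (o j : E) := by
  conv_lhs => rw [← o.sum_repr (b i)]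
  push_cast
  rfl

lemma det_repr_ne_zero {S : Submodule ℝ E} {p : ℕ} (b : Basis (Fin p) ℝ S)
    (o : OrthonormalBasis (Fin p) ℝ S) :
    (Matrix.of fun i j => o.repr (b i) j).det ≠ 0 := by
  have heq : (Matrix.of fun i j => o.repr (b i) j) = (o.toBasis.toMatrix ⇑b)ᵀ := by
    ext i j
    simp [Basis.toMatrix_apply, OrthonormalBasis.coe_toBasis_repr_apply]
  have h1 := Basis.toMatrix_mul_toMatrix_flip o.toBasis b
  have h2 := congrArg Matrix.det h1
  rw [Matrix.det_mul, Matrix.det_one] at h2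
  rw [heq, Matrix.det_transpose]
  intro h0
  rw [h0, zero_mul] at h2
  exact zero_ne_one h2

lemma subAngle_eq_sqrt (V W : Submodule ℝ E) (h : ¬(V ≤ W ∨ W ≤ V))
    (bv : OrthonormalBasis (Fin (finrank ℝ ↥(V ⊓ (V ⊓ W)ᗮ))) ℝ ↥(V ⊓ (V ⊓ W)ᗮ))
    (bw : OrthonormalBasis (Fin (finrank ℝ ↥(W ⊓ (V ⊓ W)ᗮ))) ℝ ↥(W ⊓ (V ⊓ W)ᗮ)) :
    subAngle V W =
      Real.sqrt (gram (Sum.elim (fun i => (bv i : E)) (fun j => (bw j : E)))).det := by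
  classical
  set fv := Module.finBasis ℝ ↥(V ⊓ (V ⊓ W)ᗮ)
  set fw := Module.finBasis ℝ ↥(W ⊓ (V ⊓ W)ᗮ)
  have hunfold : subAngle V W =
      tupleVol (Fin.append (fun i => ((fv i : E))) (fun j => ((fw j : E)))) /
        (tupleVol (fun i => ((fv i : E))) * tupleVol (fun j => ((fw j : E)))) := by
    rw [subAngle, if_neg h]
  set dV := Matrix.of fun i j => bv.repr (fv i) j with hdV
  set dW := Matrix.of fun i j => bw.repr (fw i) j with hdW
  have hfv : ∀ i, ((fv i : E)) = ∑ j, dV i j • (bv j : E) := fun i => coe_basis_repr fv bv i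
  have hfw : ∀ i, ((fw i : E)) = ∑ j, dW i j • (bw j : E) := fun i => coe_basis_repr fw bw i
  have hgv : gram (fun i => ((fv i : E))) = dV * dVᵀ := by
    rw [gram_transform (fun i => ((fv i : E))) (fun j => (bv j : E)) dV hfv,
      gram_orthonormal (orthonormal_coe bv), Matrix.mul_one]
  have hgw : gram (fun i => ((fw i : E))) = dW * dWᵀ := by
    rw [gram_transform (fun i => ((fw i : E))) (fun j => (bw j : E)) dW hfw,
      gram_orthonormal (orthonormal_coe bw), Matrix.mul_one]
  have hvolv : tupleVol (fun i => ((fv i : E))) = |dV.det| := by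
    rw [tupleVol_eq_sqrt, hgv, Matrix.det_mul, Matrix.det_transpose, ← sq,
      Real.sqrt_sq_eq_abs]
  have hvolw : tupleVol (fun i => ((fw i : E))) = |dW.det| := by
    rw [tupleVol_eq_sqrt, hgw, Matrix.det_mul, Matrix.det_transpose, ← sq,
      Real.sqrt_sq_eq_abs]
  -- the appended tuple
  have happ : ∀ i, Sum.elim (fun i => ((fv i : E))) (fun j => ((fw j : E))) i
      = ∑ j, (Matrix.fromBlocks dV 0 0 dW) i j •
          Sum.elim (fun i => (bv i : E)) (fun j => (bw j : E)) j := by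
    rintro (i | i) <;>
      · rw [Fintype.sum_sum_type]
        simp [Matrix.fromBlocks, hfv, hfw]
  have hga : gram (Sum.elim (fun i => ((fv i : E))) (fun j => ((fw j : E))))
      = (Matrix.fromBlocks dV 0 0 dW) * gram (Sum.elim (fun i => (bv i : E)) (fun j => (bw j : E)))
        * (Matrix.fromBlocks dV 0 0 dW)ᵀ :=
    gram_transform _ _ _ happ
  have hvola : tupleVol (Fin.append (fun i => ((fv i : E))) (fun j => ((fw j : E))))
      = |dV.det| * |dW.det| *
        Real.sqrt (gram (Sum.elim (fun i => (bv i : E)) (fun j => (bw j : E)))).det := by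
    rw [tupleVol_eq_sqrt, det_gram_append, hga, Matrix.det_mul, Matrix.det_mul,
      Matrix.det_transpose, Matrix.det_fromBlocks_zero₁₂]
    rw [show dV.det * dW.det * (gram (Sum.elim (fun i => (bv i : E)) (fun j => (bw j : E)))).det
        * (dV.det * dW.det) = (dV.det * dW.det) ^ 2 *
          (gram (Sum.elim (fun i => (bv i : E)) (fun j => (bw j : E)))).det by ring]
    rw [Real.sqrt_mul (sq_nonneg _), Real.sqrt_sq_eq_abs, abs_mul]
  have hdVne : |dV.det| ≠ 0 := abs_ne_zero.mpr (det_repr_ne_zero fv bv)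
  have hdWne : |dW.det| ≠ 0 := abs_ne_zero.mpr (det_repr_ne_zero fw bw)
  rw [hunfold, hvola, hvolv, hvolw]
  field_simp
end

lemma det_gram_comp_equiv {ι κ : Type*} [Fintype ι] [Fintype κ] [DecidableEq ι] [DecidableEq κ] (e : ι ≃ κ) (f : κ → E) :
    (gram (f ∘ e)).det = (gram f).det := by
  have h : gram (f ∘ e) = (gram f).submatrix e e := rfl
  rw [h, Matrix.det_submatrix_equiv_self]

lemma det_gram_swap {ι κ : Type*} [Fintype ι] [Fintype κ] [DecidableEq ι] [DecidableEq κ] (a : ι → E) (b : κ → E) :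
    (gram (Sum.elim a b)).det = (gram (Sum.elim b a)).det := by
  have h : Sum.elim a b = Sum.elim b a ∘ (Equiv.sumComm ι κ) := by
    funext i; rcases i with i | i <;> rfl
  rw [h, det_gram_comp_equiv]


lemma subAngle_one [FiniteDimensional ℝ E] {V W : Submodule ℝ E} (h : V ≤ W ∨ W ≤ V) :
    subAngle V W = 1 := by
  rw [subAngle, if_pos h]

end Auxiliary

/-- The angle between the orthogonal complements equals the angle
between the subspaces: `σ(Vᗮ, Wᗮ) = σ(V, V)`. -/
theorem stmt1 {E : Type*} [NormedAddCommGroup E] [InnerProductSpace ℝ E]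
    [FiniteDimensional ℝ E] (V W : Submodule ℝ E) :
    subAngle Vᗮ Wᗮ = subAngle V W := by
  classical
  by_cases h : V ≤ W ∨ W ≤ V
  · have h' : Vᗮ ≤ Wᗮ ∨ Wᗮ ≤ Vᗮ := by
      rcases h with h | h
      · exact Or.inr (Submodule.orthogonal_le h)
      · exact Or.inl (Submodule.orthogonal_le h)
    rw [subAngle_one h, subAngle_one h']
  · have h' : ¬(Vᗮ ≤ Wᗮ ∨ Wᗮ ≤ Vᗮ) := by
      rintro (h' | h') <;> apply h
      · have := Submodule.orthogonal_le h'
        rw [Submodule.orthogonal_orthogonal, Submodule.orthogonal_orthogonal] at this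
        exact Or.inr this
      · have := Submodule.orthogonal_le h'
        rw [Submodule.orthogonal_orthogonal, Submodule.orthogonal_orthogonal] at this
        exact Or.inl this
    have horth : (Vᗮ ⊓ Wᗮ)ᗮ = V ⊔ W := by
      rw [Submodule.inf_orthogonal, Submodule.orthogonal_orthogonal]
    -- submodules
    set A := V ⊓ (V ⊓ W)ᗮ with hA
    set B := W ⊓ (V ⊓ W)ᗮ with hB
    set A₂ := Vᗮ ⊓ (Vᗮ ⊓ Wᗮ)ᗮ with hA₂
    set B₂ := Wᗮ ⊓ (Vᗮ ⊓ Wᗮ)ᗮ with hB₂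
    set F := (V ⊔ W) ⊓ (V ⊓ W)ᗮ with hF
    have hA₂' : A₂ = Vᗮ ⊓ (V ⊔ W) := by rw [hA₂, horth]
    have hB₂' : B₂ = Wᗮ ⊓ (V ⊔ W) := by rw [hB₂, horth]
    -- dimension bookkeeping
    have d0 : finrank ℝ ↥(V ⊔ W) + finrank ℝ ↥(V ⊓ W) = finrank ℝ ↥V + finrank ℝ ↥W :=
      Submodule.finrank_sup_add_finrank_inf_eq V W
    have d1 : finrank ℝ ↥V + finrank ℝ ↥(Vᗮ ⊓ (V ⊔ W)) = finrank ℝ ↥(V ⊔ W) :=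
      Submodule.finrank_add_inf_finrank_orthogonal le_sup_left
    have d2 : finrank ℝ ↥W + finrank ℝ ↥(Wᗮ ⊓ (V ⊔ W)) = finrank ℝ ↥(V ⊔ W) :=
      Submodule.finrank_add_inf_finrank_orthogonal le_sup_right
    have d3 : finrank ℝ ↥(V ⊓ W) + finrank ℝ ↥((V ⊓ W)ᗮ ⊓ V) = finrank ℝ ↥V :=
      Submodule.finrank_add_inf_finrank_orthogonal inf_le_left
    have d4 : finrank ℝ ↥(V ⊓ W) + finrank ℝ ↥((V ⊓ W)ᗮ ⊓ W) = finrank ℝ ↥W :=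
      Submodule.finrank_add_inf_finrank_orthogonal inf_le_right
    have d5 : finrank ℝ ↥(V ⊓ W) + finrank ℝ ↥((V ⊓ W)ᗮ ⊓ (V ⊔ W)) = finrank ℝ ↥(V ⊔ W) :=
      Submodule.finrank_add_inf_finrank_orthogonal (inf_le_left.trans le_sup_left)
    have cA : finrank ℝ ↥A = finrank ℝ ↥((V ⊓ W)ᗮ ⊓ V) := by rw [hA, inf_comm]
    have cB : finrank ℝ ↥B = finrank ℝ ↥((V ⊓ W)ᗮ ⊓ W) := by rw [hB, inf_comm]
    have cF : finrank ℝ ↥F = finrank ℝ ↥((V ⊓ W)ᗮ ⊓ (V ⊔ W)) := by rw [hF, inf_comm]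
    have cA₂ : finrank ℝ ↥A₂ = finrank ℝ ↥(Vᗮ ⊓ (V ⊔ W)) := by rw [hA₂']
    have cB₂ : finrank ℝ ↥B₂ = finrank ℝ ↥(Wᗮ ⊓ (V ⊔ W)) := by rw [hB₂']
    have e1 : finrank ℝ ↥A₂ = finrank ℝ ↥B := by omega
    have e2 : finrank ℝ ↥B₂ = finrank ℝ ↥A := by omega
    -- F decompositions
    have hAF : A ≤ F := le_inf (inf_le_left.trans le_sup_left) inf_le_right
    have hBF : B ≤ F := le_inf (inf_le_left.trans le_sup_right) inf_le_right
    have hA₂F : A₂ ≤ F := by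
      rw [hA₂', hF]
      exact le_inf inf_le_right (inf_le_left.trans (Submodule.orthogonal_le inf_le_left))
    have hB₂F : B₂ ≤ F := by
      rw [hB₂', hF]
      exact le_inf inf_le_right (inf_le_left.trans (Submodule.orthogonal_le inf_le_right))
    have hdisjA : A ⊓ A₂ = ⊥ := by
      have hle : A ⊓ A₂ ≤ V ⊓ Vᗮ := inf_le_inf inf_le_left inf_le_left
      rw [(Submodule.orthogonal_disjoint V).eq_bot] at hle
      exact le_bot_iff.mp hle
    have hdisjB : B ⊓ B₂ = ⊥ := by
      have hle : B ⊓ B₂ ≤ W ⊓ Wᗮ := inf_le_inf inf_le_left inf_le_left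
      rw [(Submodule.orthogonal_disjoint W).eq_bot] at hle
      exact le_bot_iff.mp hle
    have hsupA : A ⊔ A₂ = F := by
      refine Submodule.eq_of_le_of_finrank_eq (sup_le hAF hA₂F) ?_
      have := Submodule.finrank_sup_add_finrank_inf_eq A A₂
      rw [hdisjA, finrank_bot] at this
      omega
    have hsupB : B ⊔ B₂ = F := by
      refine Submodule.eq_of_le_of_finrank_eq (sup_le hBF hB₂F) ?_
      have := Submodule.finrank_sup_add_finrank_inf_eq B B₂
      rw [hdisjB, finrank_bot] at this
      omega
    -- bases
    set k := finrank ℝ ↥A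
    set m := finrank ℝ ↥B
    set bv := stdOrthonormalBasis ℝ ↥A
    set bw := stdOrthonormalBasis ℝ ↥B
    set b2v := stdOrthonormalBasis ℝ ↥A₂
    set b2w := stdOrthonormalBasis ℝ ↥B₂
    set b2v' := b2v.reindex (finCongr e1) with hb2v'
    set b2w' := b2w.reindex (finCongr e2) with hb2w'
    set v : Fin k → E := fun i => (bv i : E) with hv
    set w : Fin m → E := fun i => (bw i : E) with hw
    set v₂ : Fin m → E := fun i => (b2v' i : E) with hv₂
    set w₂ : Fin k → E := fun i => (b2w' i : E) with hw₂
    rw [subAngle_eq_sqrt V W h bv bw, subAngle_eq_sqrt Vᗮ Wᗮ h' b2v b2w]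
    refine congrArg Real.sqrt ?_
    -- reindex the LHS
    have hre : Sum.elim (fun i => (b2v i : E)) (fun j => (b2w j : E))
        = Sum.elim v₂ w₂ ∘ (Equiv.sumCongr (finCongr e1) (finCongr e2)) := by
      funext i
      rcases i with i | i <;> simp [hv₂, hw₂, hb2v', hb2w']
    rw [hre, det_gram_comp_equiv]
    -- orthonormality and spans
    have hvon : Orthonormal ℝ v := orthonormal_coe bv
    have hwon : Orthonormal ℝ w := orthonormal_coe bw
    have hv₂on : Orthonormal ℝ v₂ := orthonormal_coe b2v'
    have hw₂on : Orthonormal ℝ w₂ := orthonormal_coe b2w'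
    have hmemv : ∀ i, v i ∈ A := fun i => (bv i).2
    have hmemw : ∀ i, w i ∈ B := fun i => (bw i).2
    have hmemv₂ : ∀ i, v₂ i ∈ A₂ := fun i => (b2v' i).2
    have hmemw₂ : ∀ i, w₂ i ∈ B₂ := fun i => (b2w' i).2
    have hcross1 : ∀ i j, ⟪v i, v₂ j⟫_ℝ = 0 := fun i j =>
      (inf_le_left : A₂ ≤ Vᗮ) (hmemv₂ j) (v i) ((inf_le_left : A ≤ V) (hmemv i))
    have hcross2 : ∀ i j, ⟪w₂ i, w j⟫_ℝ = 0 := fun i j => by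
      rw [real_inner_comm]
      exact (inf_le_left : B₂ ≤ Wᗮ) (hmemw₂ i) (w j) ((inf_le_left : B ≤ W) (hmemw j))
    have hspan1 : Submodule.span ℝ (Set.range (Sum.elim v v₂)) = F := by
      rw [Set.Sum.elim_range, Submodule.span_union, hv, hv₂, span_coe_basis, span_coe_basis, hsupA]
    have hspan2 : Submodule.span ℝ (Set.range (Sum.elim w₂ w)) = F := by
      rw [Set.Sum.elim_range, Submodule.span_union, hw, hw₂, span_coe_basis, span_coe_basis,
        sup_comm, hsupB]
    have key1 : (gram (Sum.elim v w)).det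
        = ((Matrix.of fun i j => ⟪w i, v₂ j⟫_ℝ).det) ^ 2 := by
      refine det_gram_elim v v₂ w (orthonormal_sum_elim hvon hv₂on hcross1) fun j => ?_
      rw [hspan1]
      exact hBF (hmemw j)
    have key2 : (gram (Sum.elim w₂ v₂)).det
        = ((Matrix.of fun i j => ⟪v₂ i, w j⟫_ℝ).det) ^ 2 := by
      refine det_gram_elim w₂ w v₂ (orthonormal_sum_elim hw₂on hwon hcross2) fun j => ?_
      rw [hspan2]
      exact hA₂F (hmemv₂ j)
    have hXT : (Matrix.of fun i j => ⟪v₂ i, w j⟫_ℝ)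
        = (Matrix.of fun i j => ⟪w i, v₂ j⟫_ℝ)ᵀ := by
      ext i j
      exact real_inner_comm _ _
    rw [det_gram_swap v₂ w₂, key2, key1, hXT, Matrix.det_transpose]
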